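/- Let A be a commutative noetherian ring and B a commutative noetherian A-algebra that is flat over A. Then the set of associated primes of B satisfies Ass_B(B) = ⋃_{p ∈ Ass_A(A)} Ass_B(B/pB). In particular, the contraction to A of any associated prime of B is an associated prime of A. -/

import Mathlib

open TensorProduct

section Helpers

variable {A B : Type*} [CommRing A] [CommRing B] [Algebra A B]

/-- Master flatness lemma: colon ideals (with finitely many denominators) commute
with flat base change. -/
lemma flat_colon_map [Module.Flat A B] (J : Ideal A) {n : ℕ} (a : Fin n → A) (b : B) :
    (∀ i, algebraMap A B (a i) * b ∈ J.map (algebraMap A B)) ↔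
      b ∈ (⨅ i, J.colon (Ideal.span {a i})).map (algebraMap A B) := by
  classical
  set K : Ideal A := ⨅ i, J.colon (Ideal.span {a i}) with hK
  constructor
  · intro h
    set f : A →ₗ[A] (Fin n → A ⧸ J) :=
      LinearMap.pi (fun i => (Submodule.mkQ (J : Submodule A A)) ∘ₗ (LinearMap.lsmul A A (a i)))
      with hf
    have hker : LinearMap.ker f = K := by
      ext z
      simp only [LinearMap.mem_ker, hf, funext_iff, LinearMap.pi_apply, LinearMap.comp_apply,
        LinearMap.lsmul_apply, Pi.zero_apply, Submodule.mkQ_apply, Submodule.Quotient.mk_eq_zero,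
        hK, Submodule.mem_iInf, Ideal.mem_colon_span_singleton, smul_eq_mul]
      exact forall_congr' fun i => by rw [mul_comm]
    have hex : Function.Exact (Submodule.subtype (K : Submodule A A)) f := by
      rw [← hker]; exact f.exact_subtype_ker_map
    have hex2 := Module.Flat.lTensor_exact B hex
    have key : (f.lTensor B) (b ⊗ₜ[A] (1 : A)) = 0 := by
      rw [LinearMap.lTensor_tmul]
      set E := (TensorProduct.piRight A A B (fun _ : Fin n => A ⧸ J)).trans
        (LinearEquiv.piCongrRight (fun _ : Fin n => tensorQuotEquivQuotSMul B J)) with hE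
      apply E.injective
      rw [E.map_zero]
      funext i
      have : E (b ⊗ₜ[A] f 1) i =
          tensorQuotEquivQuotSMul B J (b ⊗ₜ[A] (f 1 i)) := by
        simp [hE, TensorProduct.piRight_apply]
      rw [this]
      have hf1 : f 1 i = Ideal.Quotient.mk J (a i) := by
        simp [hf]
      rw [hf1, tensorQuotEquivQuotSMul_tmul_mk, Pi.zero_apply]
      rw [Submodule.Quotient.mk_eq_zero]
      rw [Ideal.smul_top_eq_map]
      simpa [Algebra.smul_def] using h i
    obtain ⟨s, hs⟩ := (hex2 (b ⊗ₜ[A] (1 : A))).mp key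
    have himg : ∀ t : B ⊗[A] (K : Submodule A A),
        TensorProduct.rid A B ((LinearMap.lTensor B (Submodule.subtype (K : Submodule A A))) t)
          ∈ K.map (algebraMap A B) := by
      intro t
      induction t using TensorProduct.induction_on with
      | zero => simp
      | tmul c k =>
          rw [LinearMap.lTensor_tmul, Submodule.subtype_apply, TensorProduct.rid_tmul,
            Algebra.smul_def]
          exact Ideal.mul_mem_right _ _ (Ideal.mem_map_of_mem _ k.2)
      | add u v hu hv => rw [map_add, map_add]; exact add_mem hu hv
    have hb : TensorProduct.rid A B (b ⊗ₜ[A] (1 : A)) = b := by simp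
    rw [← hb, ← hs]
    exact himg s
  · intro hb i
    have hle : K.map (algebraMap A B) ≤
        (J.map (algebraMap A B)).colon (Ideal.span {algebraMap A B (a i)}) := by
      rw [Ideal.map_le_iff_le_comap]
      intro y hy
      rw [Ideal.mem_comap, Ideal.mem_colon_span_singleton, ← map_mul]
      exact Ideal.mem_map_of_mem _
        (Ideal.mem_colon_span_singleton.mp ((Submodule.mem_iInf _).mp hy i))
    have := Ideal.mem_colon_span_singleton.mp (hle hb)
    rwa [mul_comm]

lemma flat_colon_map_one [Module.Flat A B] (J : Ideal A) (x : A) (b : B) :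
    algebraMap A B x * b ∈ J.map (algebraMap A B) ↔
      b ∈ (J.colon (Ideal.span {x})).map (algebraMap A B) := by
  simpa using flat_colon_map J (fun _ : Fin 1 => x) b

lemma comap_of_ass_quot [Module.Flat A B] [IsNoetherianRing B] {p : Ideal A} (hp : p.IsPrime) {q : Ideal B}
    (hq : q ∈ associatedPrimes B (B ⧸ p.map (algebraMap A B))) :
    q.comap (algebraMap A B) = p := by
  obtain ⟨hq1, m, hm⟩ := isAssociatedPrime_iff.mp (AssociatedPrimes.mem_iff.mp hq)
  obtain ⟨c, rfl⟩ := Submodule.Quotient.mk_surjective _ m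
  have hmem : ∀ e : B, e ∈ q ↔ e * c ∈ p.map (algebraMap A B) := by
    intro e
    rw [hm, Submodule.mem_colon_singleton, Submodule.mem_bot, ← Submodule.Quotient.mk_smul,
      Submodule.Quotient.mk_eq_zero, smul_eq_mul]
  have hc : c ∉ p.map (algebraMap A B) := by
    intro hc
    exact hq1.ne_top (q.eq_top_iff_one.mpr ((hmem 1).mpr (by simpa using hc)))
  apply le_antisymm
  · intro z hz
    rw [Ideal.mem_comap] at hz
    have h2 := (hmem _).mp hz
    rw [flat_colon_map_one] at h2
    by_contra hzp
    have hcolon : p.colon (Ideal.span {z}) = p := by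
      apply le_antisymm
      · intro y hy
        rw [Ideal.mem_colon_span_singleton] at hy
        exact (hp.mem_or_mem hy).resolve_right hzp
      · intro y hy
        rw [Ideal.mem_colon_span_singleton]
        exact Ideal.mul_mem_right _ _ hy
    rw [hcolon] at h2
    exact hc h2
  · intro z hz
    rw [Ideal.mem_comap]
    exact (hmem _).mpr (Ideal.mul_mem_right _ _ (Ideal.mem_map_of_mem _ hz))

lemma comap_mem_ass [Module.Flat A B] [IsNoetherianRing A] [IsNoetherianRing B] {q : Ideal B}
    (hq : q ∈ associatedPrimes B B) : q.comap (algebraMap A B) ∈ associatedPrimes A A := by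
  obtain ⟨hq1, b, hb⟩ := isAssociatedPrime_iff.mp (AssociatedPrimes.mem_iff.mp hq)
  set p := q.comap (algebraMap A B) with hp
  have hpprime : p.IsPrime := hq1.comap (algebraMap A B)
  have hmem : ∀ z : A, z ∈ p ↔ algebraMap A B z * b = 0 := by
    intro z
    rw [hp, Ideal.mem_comap, hb, Submodule.mem_colon_singleton, Submodule.mem_bot, smul_eq_mul]
  obtain ⟨n, a, ha⟩ := Submodule.fg_iff_exists_fin_generating_family.mp (IsNoetherian.noetherian p)
  have hgen : ∀ i, a i ∈ p := fun i => ha ▸ Submodule.subset_span (Set.mem_range_self i)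
  have h0 : ∀ i, algebraMap A B (a i) * b ∈ (⊥ : Ideal A).map (algebraMap A B) := by
    intro i
    rw [Ideal.map_bot]
    simpa using (hmem (a i)).mp (hgen i)
  have hbK := (flat_colon_map (⊥ : Ideal A) a b).mp h0
  set K : Ideal A := ⨅ i, (⊥ : Ideal A).colon (Ideal.span {a i}) with hKdef
  obtain ⟨m, y, hy⟩ := Submodule.fg_iff_exists_fin_generating_family.mp (IsNoetherian.noetherian K)
  have hyK : ∀ j, y j ∈ K := fun j => hy ▸ Submodule.subset_span (Set.mem_range_self j)
  have hp_le : ∀ j, p ≤ (⊥ : Ideal A).colon (Ideal.span {y j}) := by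
    intro j
    rw [← ha, Submodule.span_le]
    rintro _ ⟨i, rfl⟩
    rw [SetLike.mem_coe, Ideal.mem_colon_span_singleton]
    have h1 := Ideal.mem_colon_span_singleton.mp ((Submodule.mem_iInf _).mp (hyK j) i)
    rwa [mul_comm]
  have hinf : (Finset.univ.inf fun j => (⊥ : Ideal A).colon (Ideal.span {y j})) ≤ p := by
    intro z hz
    have hz' : ∀ j, z * y j = 0 := by
      intro j
      have h1 : z ∈ (⊥ : Ideal A).colon (Ideal.span {y j}) :=
        Finset.inf_le (f := fun j => (⊥ : Ideal A).colon (Ideal.span {y j}))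
          (Finset.mem_univ j) hz
      exact Ideal.mem_bot.mp (Ideal.mem_colon_span_singleton.mp h1)
    have h1 : K.map (algebraMap A B) ≤ (⊥ : Ideal B).colon (Ideal.span {algebraMap A B z}) := by
      rw [Ideal.map_le_iff_le_comap, ← hy, Submodule.span_le]
      rintro _ ⟨j, rfl⟩
      rw [SetLike.mem_coe, Ideal.mem_comap, Ideal.mem_colon_span_singleton, ← map_mul, Ideal.mem_bot,
        mul_comm, hz' j, map_zero]
    have h2 := Ideal.mem_bot.mp (Ideal.mem_colon_span_singleton.mp (h1 hbK))
    rw [hmem, mul_comm]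
    exact h2
  obtain ⟨j, _, hj⟩ := (Ideal.IsPrime.inf_le' hpprime).mp hinf
  refine AssociatedPrimes.mem_iff.mpr (isAssociatedPrime_iff.mpr ⟨hpprime, y j, ?_⟩)
  have hann : (⊥ : Ideal A).colon (Ideal.span {y j}) = Submodule.colon (⊥ : Ideal A) {y j} := by
    ext z
    rw [Ideal.mem_colon_span_singleton, Submodule.mem_colon_singleton, smul_eq_mul,
      Ideal.mem_bot]
  rw [← hann]
  exact le_antisymm (hp_le j) hj

lemma descent [Module.Flat A B] [IsNoetherianRing A] [IsNoetherianRing B] (I : Ideal A) :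
    ∀ q : Ideal B, q ∈ associatedPrimes B (B ⧸ I.map (algebraMap A B)) →
      ∃ p : Ideal A, p.IsPrime ∧ q ∈ associatedPrimes B (B ⧸ p.map (algebraMap A B)) := by
  induction I using IsNoetherian.induction with
  | _ I IH =>
  intro q hq
  obtain ⟨hq1, m, hm⟩ := isAssociatedPrime_iff.mp (AssociatedPrimes.mem_iff.mp hq)
  obtain ⟨c, rfl⟩ := Submodule.Quotient.mk_surjective _ m
  have hmemq : ∀ e : B, e ∈ q ↔ e * c ∈ Ideal.map (algebraMap A B) I := by
    intro e
    rw [hm, Submodule.mem_colon_singleton, Submodule.mem_bot, ← Submodule.Quotient.mk_smul,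
      Submodule.Quotient.mk_eq_zero, smul_eq_mul]
  have hIT : I ≠ ⊤ := by
    rintro rfl
    exact hq1.ne_top (q.eq_top_iff_one.mpr ((hmemq 1).mpr (by simp [Ideal.map_top])))
  haveI : Nontrivial (A ⧸ I) := Submodule.Quotient.nontrivial_iff.mpr hIT
  obtain ⟨p₀, hp₀⟩ := associatedPrimes.nonempty A (A ⧸ I)
  obtain ⟨hp₀prime, x', hx'⟩ := isAssociatedPrime_iff.mp (AssociatedPrimes.mem_iff.mp hp₀)
  obtain ⟨x, rfl⟩ := Submodule.Quotient.mk_surjective _ x'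
  have hp0 : p₀ = I.colon (Ideal.span {x}) := by
    rw [hx']
    ext z
    rw [Submodule.mem_colon_singleton, Submodule.mem_bot, ← Submodule.Quotient.mk_smul,
      Submodule.Quotient.mk_eq_zero, smul_eq_mul, Ideal.mem_colon_span_singleton]
  have hxI : x ∉ I := by
    intro h
    apply hp₀prime.ne_top
    rw [hp0, Ideal.eq_top_iff_one, Ideal.mem_colon_span_singleton, one_mul]
    exact h
  set I' := I ⊔ Ideal.span {x} with hI'
  have hII' : I < I' := by
    refine lt_of_le_of_ne le_sup_left fun h => hxI ?_
    rw [h]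
    exact Submodule.mem_sup_right (Ideal.subset_span rfl)
  by_cases hcase : ∀ d : B, d * c ∈ Ideal.map (algebraMap A B) I' → d * c ∈ Ideal.map (algebraMap A B) I
  · apply IH I' hII' q
    refine AssociatedPrimes.mem_iff.mpr (isAssociatedPrime_iff.mpr ⟨hq1, Submodule.Quotient.mk c, ?_⟩)
    ext e
    rw [Submodule.mem_colon_singleton, Submodule.mem_bot, ← Submodule.Quotient.mk_smul,
      Submodule.Quotient.mk_eq_zero, smul_eq_mul]
    constructor
    · intro he
      exact Ideal.map_mono le_sup_left ((hmemq e).mp he)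
    · intro he
      exact (hmemq e).mpr (hcase e he)
  · push_neg at hcase
    obtain ⟨d, hd1, hd2⟩ := hcase
    have hsup : Ideal.map (algebraMap A B) I' =
        Ideal.map (algebraMap A B) I ⊔ Ideal.span {algebraMap A B x} := by
      rw [hI', Ideal.map_sup, Ideal.map_span, Set.image_singleton]
    rw [hsup] at hd1
    obtain ⟨m₁, hm₁, w, hw, hdc⟩ := Submodule.mem_sup.mp hd1
    obtain ⟨u, hu⟩ := Ideal.mem_span_singleton'.mp hw
    set p := I.colon (Ideal.span {x}) with hpdef
    have hpprime : p.IsPrime := hp0 ▸ hp₀prime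
    refine ⟨p, hpprime, AssociatedPrimes.mem_iff.mpr (isAssociatedPrime_iff.mpr ⟨hq1, Submodule.Quotient.mk u, ?_⟩)⟩
    ext e
    rw [Submodule.mem_colon_singleton, Submodule.mem_bot, ← Submodule.Quotient.mk_smul,
      Submodule.Quotient.mk_eq_zero, smul_eq_mul, hpdef, ← flat_colon_map_one]
    -- goal now: e ∈ q ↔ algebraMap A B x * (e * u) ∈ Ideal.map (algebraMap A B) I
    have h3 : algebraMap A B x * (e * u) ∈ Ideal.map (algebraMap A B) I ↔
        e * (d * c) ∈ Ideal.map (algebraMap A B) I := by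
      have hrw : e * (d * c) = e * m₁ + algebraMap A B x * (e * u) := by
        rw [← hdc, ← hu]; ring
      constructor
      · intro h
        rw [hrw]
        exact Ideal.add_mem _ (Ideal.mul_mem_left _ _ hm₁) h
      · intro h
        rw [hrw] at h
        have := Ideal.sub_mem _ h (Ideal.mul_mem_left _ e hm₁)
        simpa using this
    rw [h3]
    have h4 : e * (d * c) ∈ Ideal.map (algebraMap A B) I ↔ e * d ∈ q := by
      rw [hmemq (e * d), mul_assoc]
    rw [h4]
    constructor
    · intro h
      exact Ideal.mul_mem_right _ _ h
    · intro h
      rcases hq1.mem_or_mem h with h' | h'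
      · exact h'
      · exact absurd ((hmemq d).mp h') hd2

lemma ass_quot_subset [Module.Flat A B] [IsNoetherianRing A] [IsNoetherianRing B] {p : Ideal A} (hp : p ∈ associatedPrimes A A) :
    associatedPrimes B (B ⧸ p.map (algebraMap A B)) ⊆ associatedPrimes B B := by
  obtain ⟨hpprime, x, hx⟩ := isAssociatedPrime_iff.mp (AssociatedPrimes.mem_iff.mp hp)
  intro q hq
  obtain ⟨hq1, m, hm⟩ := isAssociatedPrime_iff.mp (AssociatedPrimes.mem_iff.mp hq)
  obtain ⟨c, rfl⟩ := Submodule.Quotient.mk_surjective _ m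
  have hpx : p = (⊥ : Ideal A).colon (Ideal.span {x}) := by
    rw [hx]
    ext z
    rw [Submodule.mem_colon_singleton, Submodule.mem_bot, Ideal.mem_colon_span_singleton, Ideal.mem_bot,
      smul_eq_mul]
  refine AssociatedPrimes.mem_iff.mpr (isAssociatedPrime_iff.mpr ⟨hq1, c * algebraMap A B x, ?_⟩)
  ext e
  rw [Submodule.mem_colon_singleton, Submodule.mem_bot, smul_eq_mul,
    show e * (c * algebraMap A B x) = algebraMap A B x * (e * c) by ring]
  have h1 : e ∈ q ↔ e * c ∈ p.map (algebraMap A B) := by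
    rw [hm, Submodule.mem_colon_singleton, Submodule.mem_bot, ← Submodule.Quotient.mk_smul,
      Submodule.Quotient.mk_eq_zero, smul_eq_mul]
  rw [h1, hpx, ← flat_colon_map_one, Ideal.map_bot, Ideal.mem_bot]

end Helpers

/-- **Associated primes under flat base change.**
Let `A` be a commutative noetherian ring and `B` a commutative noetherian
`A`-algebra that is flat over `A`.  Then
`Ass_B(B) = ⋃_{p ∈ Ass_A(A)} Ass_B(B/pB)`; in particular the contraction to
`A` of any associated prime of `B` is an associated prime of `A`. -/
theorem associatedPrimes_flat_base_change
    (A B : Type*) [CommRing A] [CommRing B] [IsNoetherianRing A] [IsNoetherianRing B]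
    [Algebra A B] [Module.Flat A B] :
    (associatedPrimes B B =
        ⋃ p ∈ associatedPrimes A A,
          associatedPrimes B (B ⧸ Ideal.map (algebraMap A B) p)) ∧
      ∀ q ∈ associatedPrimes B B,
        Ideal.comap (algebraMap A B) q ∈ associatedPrimes A A := by
  constructor
  · apply Set.Subset.antisymm
    · intro q hq
      have hq' : q ∈ associatedPrimes B (B ⧸ (⊥ : Ideal A).map (algebraMap A B)) := by
        rw [Ideal.map_bot]
        rw [LinearEquiv.AssociatedPrimes.eq (Submodule.quotEquivOfEqBot (⊥ : Ideal B) rfl)]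
        exact hq
      obtain ⟨p, hpprime, hqp⟩ := descent ⊥ q hq'
      have hcomap := comap_of_ass_quot hpprime hqp
      have hpass : p ∈ associatedPrimes A A := by
        rw [← hcomap]
        exact comap_mem_ass hq
      exact Set.mem_biUnion hpass hqp
    · intro q hq
      rw [Set.mem_iUnion₂] at hq
      obtain ⟨p, hp, hq⟩ := hq
      exact ass_quot_subset hp hq
  · intro q hq
    exact comap_mem_ass hq
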